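/- Suppose μ : S → ℝ and σ : S → ℝ are continuous, σ is strictly positive, c ∈ ℝ, and the level set {s ∈ S : μ(s) = c} equals ∂A_c. Then for every ε > 0 there exists η > 0 such that the inflated boundary satisfies A_c^η ⊆ {s ∈ S : dist(s, ∂A_c) < ε}. -/
import Mathlib


open Filter Topology

noncomputable section

/-- The excursion set `A_c = {s : μ s ≥ c}`. -/
def excursionSet {α : Type*} (μ : α → ℝ) (c : ℝ) : Set α := {s | c ≤ μ s}

/-- The inflated boundary `A_c^η = {s : c - η σ(s) ≤ μ(s) ≤ c + η σ(s)}`. -/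
def inflatedBoundary {α : Type*} (μ σ : α → ℝ) (c η : ℝ) : Set α :=
  {s | c - η * σ s ≤ μ s ∧ μ s ≤ c + η * σ s}

/-- For every `ε > 0` there is `η > 0` such that the inflated boundary `A_c^η` is contained in
the `ε`-neighborhood of the boundary `∂A_c`. -/
theorem inflatedBoundary_subset_thickening
    {N : ℕ} (hN : 1 ≤ N) (S : Set (EuclideanSpace ℝ (Fin N))) (hS : IsCompact S)
    (μ σ : S → ℝ) (hμ : Continuous μ) (hσc : Continuous σ) (hσ : ∀ s, 0 < σ s) (c : ℝ)
    (hlevel : {s : S | μ s = c} = frontier (excursionSet μ c)) :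
    ∀ ε : ℝ, 0 < ε → ∃ η : ℝ, 0 < η ∧
      inflatedBoundary μ σ c η ⊆
        {s : S | Metric.infDist s (frontier (excursionSet μ c)) < ε} := by
  intro ε hε
  haveI : CompactSpace S := isCompact_iff_compactSpace.mp hS
  set F := frontier (excursionSet μ c) with hF
  set K : Set S := {s | ε ≤ Metric.infDist s F} with hK
  have hKclosed : IsClosed K :=
    isClosed_le continuous_const (Metric.continuous_infDist_pt F)
  have hKcompact : IsCompact K := hKclosed.isCompact
  rcases K.eq_empty_or_nonempty with hKe | hKne
  · refine ⟨1, one_pos, fun s _ => ?_⟩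
    by_contra h
    have : s ∈ K := by rw [hK]; exact le_of_not_gt (by simpa using h)
    simp [hKe] at this
  · have hgcont : Continuous fun s : S => |μ s - c| / σ s :=
      ((hμ.sub continuous_const).abs).div hσc (fun s => (hσ s).ne')
    obtain ⟨s₀, hs₀K, hs₀min⟩ := hKcompact.exists_isMinOn hKne hgcont.continuousOn
    have hs₀ne : μ s₀ ≠ c := by
      intro h
      have hmem : s₀ ∈ F := by rw [← hlevel]; exact h
      have : Metric.infDist s₀ F = 0 := Metric.infDist_zero_of_mem hmem
      have := hs₀K
      rw [hK] at this
      simp only [Set.mem_setOf_eq] at this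
      linarith [Metric.infDist_zero_of_mem hmem]
    set m := |μ s₀ - c| / σ s₀ with hm
    have hmpos : 0 < m := div_pos (abs_pos.mpr (sub_ne_zero.mpr hs₀ne)) (hσ s₀)
    refine ⟨m / 2, by linarith, fun s hs => ?_⟩
    by_contra h
    have hsK : s ∈ K := by rw [hK]; exact le_of_not_gt (by simpa using h)
    have hmin : m ≤ |μ s - c| / σ s := hs₀min hsK
    have hσs := hσ s
    have habs : |μ s - c| ≤ m / 2 * σ s := by
      rcases hs with ⟨h1, h2⟩
      rw [abs_le]
      constructor <;> linarith
    have hlb : m * σ s ≤ |μ s - c| := by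
      have := (le_div_iff₀ hσs).mp hmin
      linarith
    nlinarith

end
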